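/- Let Γ ≤ GL_r(ℤ) be a strongly irreducible subgroup containing a proximal element, and let p be a generating probability measure on Γ. Then for any p-stationary probability measure ν on the projective space ℙ(ℝ^r), one has ν([L]) = 0 for every hyperplane L ⊆ ℝ^r, where [L] denotes the image of L \ {0} in ℙ(ℝ^r). -/

import Mathlib

open MeasureTheory

/-- A subgroup `Γ ≤ GL_r(ℤ)` is strongly irreducible if every finite-index subgroup of
`Γ` acts irreducibly on `ℝ^r`. -/
def StronglyIrreducible {r : ℕ} (Γ : Subgroup (Matrix.GeneralLinearGroup (Fin r) ℤ)) : Prop :=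
  ∀ Δ : Subgroup (Matrix.GeneralLinearGroup (Fin r) ℤ), Δ ≤ Γ →
    (Δ.subgroupOf Γ).FiniteIndex →
    ∀ W : Submodule ℝ (Fin r → ℝ),
      (∀ g ∈ Δ, ∀ x ∈ W,
        ((g : Matrix (Fin r) (Fin r) ℤ).map (Int.cast : ℤ → ℝ)).mulVec x ∈ W) →
      W = ⊥ ∨ W = ⊤

/-- An element `g ∈ GL_r(ℤ)` is proximal if it has a unique eigenvalue of maximal
absolute value and the corresponding eigenspace is one-dimensional. -/
def IsProximal {r : ℕ} (g : Matrix.GeneralLinearGroup (Fin r) ℤ) : Prop :=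
  ∃ lam : ℂ,
    Module.End.HasEigenvalue
      (Matrix.toLin' ((g : Matrix (Fin r) (Fin r) ℤ).map (Int.cast : ℤ → ℂ))) lam ∧
    (∀ lam' : ℂ,
      Module.End.HasEigenvalue
        (Matrix.toLin' ((g : Matrix (Fin r) (Fin r) ℤ).map (Int.cast : ℤ → ℂ))) lam' →
      lam' ≠ lam → ‖lam'‖ < ‖lam‖) ∧
    Module.finrank ℂ
      (Module.End.eigenspace
        (Matrix.toLin' ((g : Matrix (Fin r) (Fin r) ℤ).map (Int.cast : ℤ → ℂ))) lam) = 1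

/-- The discrete σ-algebra on the (countable) group `GL_r(ℤ)`. -/
instance {r : ℕ} : MeasurableSpace (Matrix.GeneralLinearGroup (Fin r) ℤ) := ⊤

/-- The quotient topology on the projective space `ℙ(ℝ^r)`. -/
instance {r : ℕ} : TopologicalSpace (Projectivization ℝ (Fin r → ℝ)) :=
  inferInstanceAs (TopologicalSpace (Quotient (projectivizationSetoid ℝ (Fin r → ℝ))))

/-- The Borel σ-algebra on the projective space `ℙ(ℝ^r)`. -/
instance {r : ℕ} : MeasurableSpace (Projectivization ℝ (Fin r → ℝ)) := borel _

set_option linter.unnecessarySimpa false in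
/-- The projectivized action of `g ∈ GL_r(ℤ)` on `ℙ(ℝ^r)`. -/
noncomputable def glProjMap {r : ℕ} (g : Matrix.GeneralLinearGroup (Fin r) ℤ) :
    Projectivization ℝ (Fin r → ℝ) → Projectivization ℝ (Fin r → ℝ) :=
  Projectivization.map (Matrix.toLin' ((g : Matrix (Fin r) (Fin r) ℤ).map (Int.cast : ℤ → ℝ)))
    (by
      intro x y hxy
      have hZ : ((g⁻¹ : Matrix.GeneralLinearGroup (Fin r) ℤ) : Matrix (Fin r) (Fin r) ℤ) *
          (g : Matrix (Fin r) (Fin r) ℤ) = 1 := by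
        simpa using congrArg Units.val (inv_mul_cancel g)
      have hm : (((g⁻¹ : Matrix.GeneralLinearGroup (Fin r) ℤ) : Matrix (Fin r) (Fin r) ℤ).map
            (Int.cast : ℤ → ℝ)) * ((g : Matrix (Fin r) (Fin r) ℤ).map (Int.cast : ℤ → ℝ)) =
          1 := by
        rw [show (Int.cast : ℤ → ℝ) = ⇑(Int.castRingHom ℝ) from rfl, ← Matrix.map_mul, hZ,
          Matrix.map_one _ (map_zero _) (map_one _)]
      have hx := congrArg
        (Matrix.toLin' (((g⁻¹ : Matrix.GeneralLinearGroup (Fin r) ℤ) :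
          Matrix (Fin r) (Fin r) ℤ).map (Int.cast : ℤ → ℝ))) hxy
      rw [← Matrix.toLin'_mul_apply, ← Matrix.toLin'_mul_apply, hm] at hx
      simpa [Matrix.toLin'_one] using hx)

namespace StationaryAux

open Module Submodule

variable {r : ℕ}

instance : BorelSpace (Projectivization ℝ (Fin r → ℝ)) := ⟨rfl⟩

/-- The linear action of `g` on `ℝ^r`. -/
noncomputable def fmat (g : Matrix.GeneralLinearGroup (Fin r) ℤ) :
    (Fin r → ℝ) →ₗ[ℝ] (Fin r → ℝ) :=
  Matrix.toLin' ((g : Matrix (Fin r) (Fin r) ℤ).map (Int.cast : ℤ → ℝ))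

lemma fmat_mul (g h : Matrix.GeneralLinearGroup (Fin r) ℤ) :
    fmat (g * h) = (fmat g).comp (fmat h) := by
  unfold fmat
  rw [Units.val_mul, show (Int.cast : ℤ → ℝ) = ⇑(Int.castRingHom ℝ) from rfl, Matrix.map_mul,
    Matrix.toLin'_mul]

lemma fmat_one : fmat (1 : Matrix.GeneralLinearGroup (Fin r) ℤ) = LinearMap.id := by
  unfold fmat
  rw [Units.val_one, show (Int.cast : ℤ → ℝ) = ⇑(Int.castRingHom ℝ) from rfl,
    Matrix.map_one _ (map_zero _) (map_one _), Matrix.toLin'_one]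

lemma comap_fmat_comap_fmat (g h : Matrix.GeneralLinearGroup (Fin r) ℤ)
    (W : Submodule ℝ (Fin r → ℝ)) :
    comap (fmat h) (comap (fmat g) W) = comap (fmat (g * h)) W := by
  rw [fmat_mul, Submodule.comap_comp]

lemma comap_fmat_inv_comap (g : Matrix.GeneralLinearGroup (Fin r) ℤ)
    (W : Submodule ℝ (Fin r → ℝ)) :
    comap (fmat g⁻¹) (comap (fmat g) W) = W := by
  rw [comap_fmat_comap_fmat, mul_inv_cancel, fmat_one, Submodule.comap_id]

lemma comap_comap_fmat_inv (g : Matrix.GeneralLinearGroup (Fin r) ℤ)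
    (W : Submodule ℝ (Fin r → ℝ)) :
    comap (fmat g) (comap (fmat g⁻¹) W) = W := by
  rw [comap_fmat_comap_fmat, inv_mul_cancel, fmat_one, Submodule.comap_id]

/-- `fmat g` as a linear equivalence. -/
noncomputable def femat (g : Matrix.GeneralLinearGroup (Fin r) ℤ) :
    (Fin r → ℝ) ≃ₗ[ℝ] (Fin r → ℝ) :=
  LinearEquiv.ofLinear (fmat g) (fmat g⁻¹)
    (by rw [← fmat_mul, mul_inv_cancel, fmat_one])
    (by rw [← fmat_mul, inv_mul_cancel, fmat_one])

lemma finrank_comap_fmat (g : Matrix.GeneralLinearGroup (Fin r) ℤ)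
    (W : Submodule ℝ (Fin r → ℝ)) :
    finrank ℝ (W.comap (fmat g)) = finrank ℝ W := by
  have h1 : W.comap (fmat g) = W.comap (femat g : (Fin r → ℝ) →ₗ[ℝ] (Fin r → ℝ)) := rfl
  rw [h1, Submodule.comap_equiv_eq_map_symm, LinearEquiv.finrank_map_eq]

/-- The projectivization of a linear subspace `W`, as a subset of `ℙ(ℝ^r)`. -/
def projSet (W : Submodule ℝ (Fin r → ℝ)) : Set (Projectivization ℝ (Fin r → ℝ)) :=
  {q | q.rep ∈ W}

lemma mem_projSet_mk {W : Submodule ℝ (Fin r → ℝ)} {v : Fin r → ℝ} (hv : v ≠ 0) :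
    Projectivization.mk ℝ v hv ∈ projSet W ↔ v ∈ W := by
  obtain ⟨a, ha⟩ := (Projectivization.mk_eq_mk_iff ℝ _ _ _ hv).mp
    (Projectivization.mk_rep (Projectivization.mk ℝ v hv))
  have : (Projectivization.mk ℝ v hv).rep = (a : ℝ) • v := by
    rw [← ha]; rfl
  simp only [projSet, Set.mem_setOf_eq, this]
  exact W.smul_mem_iff a.ne_zero

lemma projSet_inter (W₁ W₂ : Submodule ℝ (Fin r → ℝ)) :
    projSet W₁ ∩ projSet W₂ = projSet (W₁ ⊓ W₂) := by
  ext q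
  simp [projSet, Submodule.mem_inf]

lemma projSet_bot : projSet (⊥ : Submodule ℝ (Fin r → ℝ)) = ∅ := by
  ext q
  simp [projSet, Projectivization.rep_nonzero q]

lemma isClosed_projSet (W : Submodule ℝ (Fin r → ℝ)) : IsClosed (projSet W) := by
  have h := (isQuotientMap_quotient_mk'
      (s := projectivizationSetoid ℝ (Fin r → ℝ))).isClosed_preimage
      (s := (projSet W : Set (Quotient (projectivizationSetoid ℝ (Fin r → ℝ)))))
  refine h.mp ?_
  have hpre : (@Quotient.mk' _ (projectivizationSetoid ℝ (Fin r → ℝ))) ⁻¹' (projSet W) =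
      (Subtype.val : {v : Fin r → ℝ // v ≠ 0} → (Fin r → ℝ)) ⁻¹' (W : Set (Fin r → ℝ)) := by
    ext x
    have hx : (@Quotient.mk' _ (projectivizationSetoid ℝ (Fin r → ℝ)) x) =
        Projectivization.mk ℝ x.1 x.2 := rfl
    show Projectivization.mk ℝ x.1 x.2 ∈ projSet W ↔ _
    rw [mem_projSet_mk x.2]
    exact Iff.rfl
  rw [hpre]
  exact (W.closed_of_finiteDimensional).preimage continuous_subtype_val

lemma measurableSet_projSet (W : Submodule ℝ (Fin r → ℝ)) : MeasurableSet (projSet W) :=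
  (isClosed_projSet W).measurableSet

lemma glProjMap_preimage (g : Matrix.GeneralLinearGroup (Fin r) ℤ)
    (W : Submodule ℝ (Fin r → ℝ)) :
    glProjMap g ⁻¹' projSet W = projSet (W.comap (fmat g)) := by
  have hinj : Function.Injective (fmat (r := r) g) := by
    intro x y hxy
    have := congrArg (fmat g⁻¹) hxy
    calc x = ((fmat g⁻¹).comp (fmat g)) x := by
              rw [← fmat_mul, inv_mul_cancel, fmat_one]; rfl
      _ = ((fmat g⁻¹).comp (fmat g)) y := by simpa [LinearMap.comp_apply] using this
      _ = y := by rw [← fmat_mul, inv_mul_cancel, fmat_one]; rfl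
  have hgl : glProjMap g = Projectivization.map (fmat g) hinj := rfl
  ext q
  induction q using Projectivization.ind with
  | h v hv =>
    rw [Set.mem_preimage, hgl, Projectivization.map_mk, mem_projSet_mk, mem_projSet_mk hv,
      Submodule.mem_comap]

end StationaryAux

open StationaryAux in
/-- **Hyperplanes are null for stationary measures.** Let `Γ ≤ GL_r(ℤ)` be strongly
irreducible with a proximal element and `p` a generating probability measure on `Γ`.
Then every `p`-stationary probability measure `ν` on `ℙ(ℝ^r)` gives zero mass to the
projectivization `[L]` of every hyperplane `L = {x : ⟨x, w⟩ = 0} ⊆ ℝ^r`. -/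
theorem stationary_measure_null_hyperplane
    {r : ℕ} (Γ : Subgroup (Matrix.GeneralLinearGroup (Fin r) ℤ))
    (hsi : StronglyIrreducible Γ) (hprox : ∃ g ∈ Γ, IsProximal g)
    (p : Measure (Matrix.GeneralLinearGroup (Fin r) ℤ)) [IsProbabilityMeasure p]
    (hgen : Subgroup.closure {g | p {g} ≠ 0} = Γ)
    (ν : Measure (Projectivization ℝ (Fin r → ℝ))) [IsProbabilityMeasure ν]
    (hstat : ∀ A : Set (Projectivization ℝ (Fin r → ℝ)), MeasurableSet A →
      ν A = ∫⁻ g, ν (glProjMap g ⁻¹' A) ∂p)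
    (w : Fin r → ℝ) (hw : w ≠ 0) :
    ν {q : Projectivization ℝ (Fin r → ℝ) | ∑ i, q.rep i * w i = 0} = 0 := by
  classical
  by_contra hne
  -- the hyperplane as a submodule
  set φ : (Fin r → ℝ) →ₗ[ℝ] ℝ := ∑ i, (w i) • LinearMap.proj i with hφdef
  have hφ : ∀ x : Fin r → ℝ, φ x = ∑ i, x i * w i := by
    intro x
    simp [hφdef, mul_comm]
  have hset : {q : Projectivization ℝ (Fin r → ℝ) | ∑ i, q.rep i * w i = 0} =
      projSet (LinearMap.ker φ) := by
    ext q
    simp [projSet, LinearMap.mem_ker, hφ]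
  rw [hset] at hne
  set L := LinearMap.ker φ with hLdef
  have hLtop : L ≠ ⊤ := by
    intro h
    have hwL : w ∈ L := h ▸ Submodule.mem_top
    rw [LinearMap.mem_ker, hφ] at hwL
    have hz : ∀ i ∈ Finset.univ, w i * w i = 0 :=
      (Finset.sum_eq_zero_iff_of_nonneg (fun i _ => mul_self_nonneg (w i))).mp hwL
    exact hw (funext fun i => mul_self_eq_zero.mp (hz i (Finset.mem_univ i)))
  have hLpos : (0 : ENNReal) < ν (projSet L) := pos_iff_ne_zero.mpr hne
  -- minimal dimension of a proper subspace of positive measure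
  have hex : ∃ n : ℕ, ∃ W : Submodule ℝ (Fin r → ℝ),
      Module.finrank ℝ W = n ∧ W ≠ ⊤ ∧ 0 < ν (projSet W) := ⟨_, L, rfl, hLtop, hLpos⟩
  set d := Nat.find hex with hddef
  obtain ⟨W₁, hW₁rank, hW₁top, hW₁pos⟩ := Nat.find_spec hex
  have hrtop : Module.finrank ℝ (⊤ : Submodule ℝ (Fin r → ℝ)) = r := by
    rw [finrank_top]
    exact Module.finrank_fin_fun ℝ
  have hdr : d < r := by
    have h1 := Submodule.finrank_lt (K := ℝ) hW₁top
    rw [hW₁rank, Module.finrank_fin_fun ℝ] at h1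
    exact h1
  have hmin : ∀ W : Submodule ℝ (Fin r → ℝ), Module.finrank ℝ W < d → ν (projSet W) = 0 := by
    intro W hWd
    by_contra h
    have hWtop : W ≠ ⊤ := by
      intro he
      rw [he, hrtop] at hWd
      omega
    exact Nat.find_min hex hWd ⟨W, rfl, hWtop, pos_iff_ne_zero.mpr h⟩
  -- the supremum of measures of dimension-d subspaces
  set f : {W : Submodule ℝ (Fin r → ℝ) // Module.finrank ℝ W = d} → ENNReal :=
    fun i => ν (projSet i.1) with hfdef
  set α := ⨆ i, f i with hαdef
  have hα_pos : 0 < α := lt_of_lt_of_le hW₁pos (le_iSup f ⟨W₁, hW₁rank⟩)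
  have hα_le_one : α ≤ 1 := iSup_le fun i => prob_le_one
  have hα_ne_top : α ≠ ⊤ := (lt_of_le_of_lt hα_le_one ENNReal.one_lt_top).ne
  -- pairwise a.e. disjointness
  have hdisj : Pairwise (Function.onFun (MeasureTheory.AEDisjoint ν)
      fun i : {W : Submodule ℝ (Fin r → ℝ) // Module.finrank ℝ W = d} => projSet i.1) := by
    intro i j hij
    have hne' : i.1 ≠ j.1 := fun h => hij (Subtype.ext h)
    show ν (projSet i.1 ∩ projSet j.1) = 0
    rw [projSet_inter]
    apply hmin
    have hle1 : Module.finrank ℝ (i.1 ⊓ j.1 : Submodule ℝ (Fin r → ℝ)) ≤ d :=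
      le_trans (Submodule.finrank_mono inf_le_left) (le_of_eq i.2)
    rcases lt_or_eq_of_le hle1 with h | h
    · exact h
    · exfalso
      have h1 : (i.1 ⊓ j.1 : Submodule ℝ (Fin r → ℝ)) = i.1 :=
        Submodule.eq_of_le_of_finrank_le inf_le_left (by rw [h, i.2])
      have h2 : (i.1 ⊓ j.1 : Submodule ℝ (Fin r → ℝ)) = j.1 :=
        Submodule.eq_of_le_of_finrank_le inf_le_right (by rw [h, j.2])
      exact hne' (h1 ▸ h2)
  have hfin0 : ({i : {W : Submodule ℝ (Fin r → ℝ) // Module.finrank ℝ W = d} |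
      α / 2 ≤ f i}).Finite := by
    have := MeasureTheory.Measure.finite_const_le_meas_of_disjoint_iUnion₀ ν
      (ENNReal.half_pos hα_pos.ne') (fun i : {W : Submodule ℝ (Fin r → ℝ) // Module.finrank ℝ W = d} =>
        (measurableSet_projSet i.1).nullMeasurableSet)
      hdisj (measure_ne_top ν _)
    exact this
  -- the supremum is attained
  have hhalf : α / 2 < α := ENNReal.half_lt_self hα_pos.ne' hα_ne_top
  obtain ⟨i₀, hi₀⟩ := lt_iSup_iff.mp (hαdef ▸ hhalf)
  obtain ⟨imax, himax_mem, himax⟩ :=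
    Set.Finite.exists_maximalFor f _ hfin0 ⟨i₀, hi₀.le⟩
  have hmax : f imax = α := by
    refine le_antisymm (hαdef ▸ le_iSup f imax) ?_
    by_contra hlt
    obtain ⟨j, hj⟩ := lt_iSup_iff.mp (hαdef ▸ not_le.mp hlt)
    have hjmem : j ∈ {i : {W : Submodule ℝ (Fin r → ℝ) // Module.finrank ℝ W = d} |
        α / 2 ≤ f i} := le_of_lt (lt_of_le_of_lt himax_mem hj)
    exact absurd (himax hjmem hj.le) (not_le.mpr hj)
  -- the finite set of maximal-measure subspaces
  set F : Set (Submodule ℝ (Fin r → ℝ)) :=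
    {W | Module.finrank ℝ W = d ∧ ν (projSet W) = α} with hFdef
  set W₀ := imax.1 with hW₀def
  have hW₀F : W₀ ∈ F := ⟨imax.2, hmax⟩
  have hFfin : F.Finite := by
    have hsub : F ⊆ Subtype.val '' {i : {W : Submodule ℝ (Fin r → ℝ) //
        Module.finrank ℝ W = d} | α / 2 ≤ f i} := by
      rintro W ⟨h1, h2⟩
      exact ⟨⟨W, h1⟩, by show α / 2 ≤ ν (projSet W); rw [h2]; exact hhalf.le, rfl⟩
    exact ((hfin0.image _).subset hsub)
  -- key step: comap by generators preserves F
  have hkey : ∀ g : Matrix.GeneralLinearGroup (Fin r) ℤ, p {g} ≠ 0 →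
      ∀ W ∈ F, W.comap (fmat g) ∈ F := by
    intro g hg W hWF
    set ψ : Matrix.GeneralLinearGroup (Fin r) ℤ → ENNReal :=
      fun g' => ν (projSet (W.comap (fmat g'))) with hψdef
    have h1 : ∫⁻ g', ψ g' ∂p = α := by
      rw [← hWF.2, hstat (projSet W) (measurableSet_projSet W)]
      exact (lintegral_congr fun g' => by rw [glProjMap_preimage]).symm
    have hψmeas : Measurable ψ := fun s _ => MeasurableSpace.measurableSet_top
    have hψle : ∀ g', ψ g' ≤ α := by
      intro g'
      have h2 : ψ g' = f ⟨W.comap (fmat g'), by rw [finrank_comap_fmat]; exact hWF.1⟩ := rfl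
      exact (le_of_eq h2).trans (le_iSup f _)
    have hψnetop : ∫⁻ g', ψ g' ∂p ≠ ⊤ := by rw [h1]; exact hα_ne_top
    have hsub : ∫⁻ g', (α - ψ g') ∂p = 0 := by
      rw [lintegral_sub hψmeas hψnetop (Filter.Eventually.of_forall hψle), h1,
        lintegral_const, measure_univ, mul_one, tsub_self]
    have hae := (lintegral_eq_zero_iff
      (f := fun g' => α - ψ g')
      (fun s _ => MeasurableSpace.measurableSet_top)).mp hsub
    have hgood : α - ψ g = 0 := by
      by_contra hne'
      apply hg
      have hsub' : ({g} : Set (Matrix.GeneralLinearGroup (Fin r) ℤ)) ⊆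
          {x | α - ψ x ≠ 0} := by
        intro x hx
        rw [Set.mem_singleton_iff] at hx
        subst hx
        exact hne'
      refine measure_mono_null hsub' ?_
      have h3 := hae
      rw [Filter.EventuallyEq, Filter.eventually_iff, mem_ae_iff] at h3
      simpa [Set.compl_setOf] using h3
    have hψg : ψ g = α := le_antisymm (hψle g) (tsub_eq_zero_iff_le.mp hgood)
    exact ⟨by rw [finrank_comap_fmat]; exact hWF.1, hψg⟩
  -- invariance under all of Γ
  have hQ : ∀ g ∈ Γ, ∀ W ∈ F, W.comap (fmat g) ∈ F := by
    intro g hg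
    rw [← hgen] at hg
    refine Subgroup.closure_induction
      (p := fun x _ => ∀ W ∈ F, W.comap (fmat x) ∈ F)
      (fun x hx => hkey x hx)
      (fun W hWF => by rw [fmat_one, Submodule.comap_id]; exact hWF)
      (fun x y hx hy px py W hWF => by
        rw [← comap_fmat_comap_fmat x y W]
        exact py _ (px W hWF))
      (fun x hx px W hWF => by
        have hmaps : Set.MapsTo (fun W => Submodule.comap (fmat x) W) F F :=
          fun W hW => px W hW
        have hinj : Set.InjOn (fun W => Submodule.comap (fmat x) W) F := by
          intro a _ b _ hab
          have h4 := congrArg (Submodule.comap (fmat x⁻¹)) hab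
          simpa [comap_fmat_inv_comap] using h4
        have hbij := (hFfin.injOn_iff_bijOn_of_mapsTo hmaps).mp hinj
        obtain ⟨W', hW'F, hW'⟩ := hbij.surjOn hWF
        have h5 : W.comap (fmat x⁻¹) = W' := by
          rw [← hW']
          exact comap_fmat_inv_comap x W'
        rw [h5]
        exact hW'F)
      hg
  -- the stabilizer of W₀ in Γ
  set Δ : Subgroup (Matrix.GeneralLinearGroup (Fin r) ℤ) :=
    { carrier := {g | g ∈ Γ ∧ Submodule.comap (fmat g) W₀ = W₀}
      one_mem' := ⟨one_mem Γ, by rw [fmat_one, Submodule.comap_id]⟩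
      mul_mem' := by
        rintro a b ⟨haΓ, ha⟩ ⟨hbΓ, hb⟩
        exact ⟨mul_mem haΓ hbΓ, by rw [← comap_fmat_comap_fmat, ha, hb]⟩
      inv_mem' := by
        rintro a ⟨haΓ, ha⟩
        refine ⟨inv_mem haΓ, ?_⟩
        conv_lhs => rw [← ha]
        exact comap_fmat_inv_comap a W₀ } with hΔdef
  have hΔle : Δ ≤ Γ := fun g hg => hg.1
  have hΔmem : ∀ g : Matrix.GeneralLinearGroup (Fin r) ℤ,
      g ∈ Δ ↔ g ∈ Γ ∧ Submodule.comap (fmat g) W₀ = W₀ := fun g => Iff.rfl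
  -- finite index via injection into F
  have hfinQ : Finite (Γ ⧸ Δ.subgroupOf Γ) := by
    have hFsub : Finite ↥F := hFfin.to_subtype
    let Ψ : Γ ⧸ Δ.subgroupOf Γ → ↥F := fun x =>
      Quotient.liftOn' x
        (fun g : Γ =>
          (⟨Submodule.comap (fmat ((g : Matrix.GeneralLinearGroup (Fin r) ℤ))⁻¹) W₀,
            hQ _ (inv_mem g.2) W₀ hW₀F⟩ : ↥F))
        (by
          intro a b hab
          rw [QuotientGroup.leftRel_apply, Subgroup.mem_subgroupOf] at hab
          have h1 : ((a : Matrix.GeneralLinearGroup (Fin r) ℤ))⁻¹ *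
              (b : Matrix.GeneralLinearGroup (Fin r) ℤ) ∈ Δ := hab
          have hδinv := ((hΔmem _).mp (inv_mem h1)).2
          apply Subtype.ext
          show Submodule.comap (fmat ((a : Matrix.GeneralLinearGroup (Fin r) ℤ))⁻¹) W₀ =
            Submodule.comap (fmat ((b : Matrix.GeneralLinearGroup (Fin r) ℤ))⁻¹) W₀
          conv_lhs => rw [← hδinv]
          rw [comap_fmat_comap_fmat]
          congr 1
          congr 1
          group)
    have hinjΨ : Function.Injective Ψ := by
      intro x y
      refine Quotient.inductionOn₂' x y ?_
      intro a b hab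
      have h2 : Submodule.comap (fmat ((a : Matrix.GeneralLinearGroup (Fin r) ℤ))⁻¹) W₀ =
          Submodule.comap (fmat ((b : Matrix.GeneralLinearGroup (Fin r) ℤ))⁻¹) W₀ :=
        congrArg Subtype.val hab
      apply Quotient.sound'
      rw [QuotientGroup.leftRel_apply, Subgroup.mem_subgroupOf]
      show ((a : Matrix.GeneralLinearGroup (Fin r) ℤ))⁻¹ *
          (b : Matrix.GeneralLinearGroup (Fin r) ℤ) ∈ Δ
      refine ⟨mul_mem (inv_mem a.2) b.2, ?_⟩
      rw [← comap_fmat_comap_fmat, h2, comap_fmat_comap_fmat, inv_mul_cancel, fmat_one,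
        Submodule.comap_id]
    exact Finite.of_injective Ψ hinjΨ
  have hfinidx : (Δ.subgroupOf Γ).FiniteIndex := by
    haveI := hfinQ
    exact Subgroup.finiteIndex_of_finite_quotient (H := Δ.subgroupOf Γ)
  -- invariance hypothesis for strong irreducibility
  have hinv : ∀ g ∈ Δ, ∀ x ∈ W₀,
      ((g : Matrix (Fin r) (Fin r) ℤ).map (Int.cast : ℤ → ℝ)).mulVec x ∈ W₀ := by
    intro g hg x hx
    have h1 : x ∈ Submodule.comap (fmat g) W₀ := by
      rw [hg.2]
      exact hx
    have h2 := Submodule.mem_comap.mp h1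
    rw [← Matrix.toLin'_apply]
    exact h2
  rcases hsi Δ hΔle hfinidx W₀ hinv with h | h
  · -- W₀ = ⊥ : impossible, since it has measure α > 0
    have h6 := hW₀F.2
    rw [h, projSet_bot, measure_empty] at h6
    exact hα_pos.ne' h6.symm
  · -- W₀ = ⊤ : impossible, since dim W₀ = d < r
    have h7 := imax.2
    rw [show imax.1 = W₀ from rfl, h, hrtop] at h7
    omega
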